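/- Let γ ∈ (0, 1/2] and σ_c ≥ 0. On a probability space, let 𝐱_0 ∈ ℝ^{nd} be deterministic and let {ε_k}_{k≥0} be ℝ^{nd}-valued random vectors satisfying 𝔼[ε_k | σ(ε_0, …, ε_{k−1})] = 0 and 𝔼‖ε_k‖² ≤ n·σ_c² for every k. Define 𝐱_k := (I_{nd} − γ𝐐')𝐱_{k−1} + γ𝐐̂ε_{k−1} for k ≥ 1. Then for every k ≥ 0: 𝔼‖𝐱_k − 𝐱̄_k‖² ≤ (1 − γ(1 − λ₂))^{2k}·‖𝐱_0 − 𝐱̄_0‖² + 2nγσ_c²/(1 − λ₂). -/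

import Mathlib

open Matrix Finset MeasureTheory
open scoped Kronecker

noncomputable section

/-- The `nd × nd` averaging matrix `(1/n)(1ₙ1ₙᵀ ⊗ I_d)`. -/
def avgMat (n d : ℕ) : Matrix (Fin n × Fin d) (Fin n × Fin d) ℝ :=
  ((n : ℝ)⁻¹ • Matrix.of fun _ _ : Fin n => (1 : ℝ)) ⊗ₖ (1 : Matrix (Fin d) (Fin d) ℝ)

/-- `𝐐' := (Iₙ − Q) ⊗ I_d`. -/
def Qprime {n : ℕ} (Q : Matrix (Fin n) (Fin n) ℝ) (d : ℕ) :
    Matrix (Fin n × Fin d) (Fin n × Fin d) ℝ :=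
  (1 - Q) ⊗ₖ (1 : Matrix (Fin d) (Fin d) ℝ)

/-- `𝐐̂ := (Q − diag(Q)) ⊗ I_d`. -/
def Qhat {n : ℕ} (Q : Matrix (Fin n) (Fin n) ℝ) (d : ℕ) :
    Matrix (Fin n × Fin d) (Fin n × Fin d) ℝ :=
  (Q - Matrix.diagonal fun i => Q i i) ⊗ₖ (1 : Matrix (Fin d) (Fin d) ℝ)

/-! ### Auxiliary lemmas -/

lemma norm_sq_euclid {ι : Type*} [Fintype ι] (v : EuclideanSpace ℝ ι) :
    ‖v‖ ^ 2 = ∑ i, (v i) ^ 2 := by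
  rw [EuclideanSpace.norm_eq, Real.sq_sqrt (by positivity)]
  simp [sq_abs]

lemma euclid_ext {ι : Type*} [Fintype ι] {v w : EuclideanSpace ℝ ι}
    (h : ∀ i, v i = w i) : v = w := PiLp.ext h

lemma teu_coord {ι κ : Type*} [Fintype ι] [Fintype κ] [DecidableEq ι]
    (M : Matrix κ ι ℝ) (v : EuclideanSpace ℝ ι) (i : κ) :
    Matrix.toEuclideanLin M v i = ∑ j, M i j * v j := rfl

lemma teu_mul {ι : Type*} [Fintype ι] [DecidableEq ι] (M N : Matrix ι ι ℝ)
    (v : EuclideanSpace ℝ ι) :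
    Matrix.toEuclideanLin (M * N) v = Matrix.toEuclideanLin M (Matrix.toEuclideanLin N v) := by
  refine euclid_ext fun i => ?_
  simp only [teu_coord, Matrix.mul_apply, Finset.sum_mul, Finset.mul_sum]
  rw [Finset.sum_comm]
  exact Finset.sum_congr rfl fun j _ => Finset.sum_congr rfl fun l _ => by ring

lemma inner_euclid {ι : Type*} [Fintype ι] (v w : EuclideanSpace ℝ ι) :
    (inner ℝ v w : ℝ) = ∑ i, v i * w i := by
  simp [PiLp.inner_apply, RCLike.inner_apply, conj_trivial, mul_comm]

lemma teu_symm {ι : Type*} [Fintype ι] [DecidableEq ι] (M : Matrix ι ι ℝ)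
    (hM : ∀ i j, M i j = M j i) (x y : EuclideanSpace ℝ ι) :
    (inner ℝ (Matrix.toEuclideanLin M x) y : ℝ) = inner ℝ x (Matrix.toEuclideanLin M y) := by
  simp only [inner_euclid, teu_coord, Finset.sum_mul, Finset.mul_sum]
  rw [Finset.sum_comm]
  exact Finset.sum_congr rfl fun i _ => Finset.sum_congr rfl fun j _ => by rw [hM j i]; ring

lemma schur_norm_sq {ι : Type*} [Fintype ι] [DecidableEq ι] (M : Matrix ι ι ℝ)
    (h0 : ∀ i j, 0 ≤ M i j) (hrow : ∀ i, ∑ j, M i j ≤ 1) (hcol : ∀ j, ∑ i, M i j ≤ 1)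
    (v : EuclideanSpace ℝ ι) :
    ‖Matrix.toEuclideanLin M v‖ ^ 2 ≤ ‖v‖ ^ 2 := by
  rw [norm_sq_euclid, norm_sq_euclid]
  calc ∑ i, (Matrix.toEuclideanLin M v i) ^ 2
      ≤ ∑ i, ∑ j, M i j * (v j) ^ 2 := by
        refine Finset.sum_le_sum fun i _ => ?_
        rw [teu_coord]
        have key : (∑ j, M i j * v j) ^ 2 ≤ (∑ j, M i j) * ∑ j, M i j * (v j) ^ 2 := by
          have h := Finset.sum_mul_sq_le_sq_mul_sq Finset.univ
            (fun j => Real.sqrt (M i j)) (fun j => Real.sqrt (M i j) * v j)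
          calc (∑ j, M i j * v j) ^ 2
              = (∑ j, Real.sqrt (M i j) * (Real.sqrt (M i j) * v j)) ^ 2 := by
                congr 1; refine Finset.sum_congr rfl fun j _ => ?_
                rw [← mul_assoc, Real.mul_self_sqrt (h0 i j)]
            _ ≤ (∑ j, Real.sqrt (M i j) ^ 2) * ∑ j, (Real.sqrt (M i j) * v j) ^ 2 := h
            _ = (∑ j, M i j) * ∑ j, M i j * (v j) ^ 2 := by
                congr 1
                · exact Finset.sum_congr rfl fun j _ => Real.sq_sqrt (h0 i j)
                · refine Finset.sum_congr rfl fun j _ => ?_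
                  rw [mul_pow, Real.sq_sqrt (h0 i j)]
        refine key.trans ?_
        have hnn : 0 ≤ ∑ j, M i j * (v j) ^ 2 :=
          Finset.sum_nonneg fun j _ => mul_nonneg (h0 i j) (sq_nonneg _)
        nlinarith [hrow i]
    _ = ∑ j, (∑ i, M i j) * (v j) ^ 2 := by
        rw [Finset.sum_comm]
        exact Finset.sum_congr rfl fun j _ => (Finset.sum_mul _ _ _).symm
    _ ≤ ∑ j, (v j) ^ 2 := by
        refine Finset.sum_le_sum fun j _ => ?_
        nlinarith [hcol j, sq_nonneg (v j)]

def eslice {n d : ℕ} (z : EuclideanSpace ℝ (Fin n × Fin d)) (a : Fin d) :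
    EuclideanSpace ℝ (Fin n) := (WithLp.equiv 2 _).symm (fun j => z (j, a))

@[simp] lemma eslice_apply {n d : ℕ} (z : EuclideanSpace ℝ (Fin n × Fin d)) (a : Fin d)
    (j : Fin n) : eslice z a j = z (j, a) := rfl

lemma kron_coord {n d : ℕ} (M : Matrix (Fin n) (Fin n) ℝ)
    (z : EuclideanSpace ℝ (Fin n × Fin d)) (p : Fin n × Fin d) :
    Matrix.toEuclideanLin (M ⊗ₖ (1 : Matrix (Fin d) (Fin d) ℝ)) z p
      = Matrix.toEuclideanLin M (eslice z p.2) p.1 := by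
  rw [teu_coord, teu_coord]
  rw [Fintype.sum_prod_type]
  refine Finset.sum_congr rfl fun j _ => ?_
  simp [Matrix.kroneckerMap_apply, Matrix.one_apply, mul_ite, ite_mul, eq_comm]

lemma kron_norm_sq {n d : ℕ} (M : Matrix (Fin n) (Fin n) ℝ)
    (z : EuclideanSpace ℝ (Fin n × Fin d)) :
    ‖Matrix.toEuclideanLin (M ⊗ₖ (1 : Matrix (Fin d) (Fin d) ℝ)) z‖ ^ 2
      = ∑ a, ‖Matrix.toEuclideanLin M (eslice z a)‖ ^ 2 := by
  rw [norm_sq_euclid]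
  rw [Fintype.sum_prod_type_right]
  refine Finset.sum_congr rfl fun a _ => ?_
  rw [norm_sq_euclid]
  exact Finset.sum_congr rfl fun i _ => by rw [kron_coord]

lemma norm_sq_slices {n d : ℕ} (z : EuclideanSpace ℝ (Fin n × Fin d)) :
    ‖z‖ ^ 2 = ∑ a, ‖eslice z a‖ ^ 2 := by
  rw [norm_sq_euclid, Fintype.sum_prod_type_right]
  exact Finset.sum_congr rfl fun a _ => by rw [norm_sq_euclid]; simp

section Prob

variable {Ω : Type*} {m inst : MeasurableSpace Ω} {μ : Measure Ω}

lemma integrable_inner_of_mem2 {E : Type*} [NormedAddCommGroup E] [InnerProductSpace ℝ E]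
    {f g : Ω → E} (hf : MemLp f 2 μ) (hg : MemLp g 2 μ) :
    Integrable (fun ω => (inner ℝ (f ω) (g ω) : ℝ)) μ := by
  have h := MeasureTheory.L2.integrable_inner (𝕜 := ℝ) (hf.toLp f) (hg.toLp g)
  refine h.congr ?_
  filter_upwards [hf.coeFn_toLp, hg.coeFn_toLp] with ω h1 h2
  rw [h1, h2]

lemma integrable_mul_of_mem2 {g z : Ω → ℝ} (hg : MemLp g 2 μ) (hz : MemLp z 2 μ) :
    Integrable (fun ω => g ω * z ω) μ := by
  have h := integrable_inner_of_mem2 (E := ℝ) hg hz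
  refine h.congr (Filter.Eventually.of_forall fun ω => ?_)
  simp [RCLike.inner_apply, conj_trivial, mul_comm]

lemma integrable_norm_sq_of_mem2 {E : Type*} [NormedAddCommGroup E] [InnerProductSpace ℝ E]
    {f : Ω → E} (hf : MemLp f 2 μ) :
    Integrable (fun ω => ‖f ω‖ ^ 2) μ := by
  have h := integrable_inner_of_mem2 hf hf
  refine h.congr (Filter.Eventually.of_forall fun ω => ?_)
  show (inner ℝ (f ω) (f ω) : ℝ) = ‖f ω‖ ^ 2
  exact real_inner_self_eq_norm_sq (f ω)

lemma integral_mul_condexp_zero [IsProbabilityMeasure μ]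
    (hm : m ≤ inst) {g z : Ω → ℝ} (hg : StronglyMeasurable[m] g)
    (hg2 : MemLp g 2 μ) (hz : MemLp z 2 μ) (hz0 : μ[z|m] =ᵐ[μ] 0) :
    ∫ ω, g ω * z ω ∂μ = 0 := by
  have hint : Integrable (g * z) μ := integrable_mul_of_mem2 hg2 hz
  have hce : μ[g * z|m] =ᵐ[μ] g * μ[z|m] :=
    condExp_mul_of_stronglyMeasurable_left hg hint (hz.integrable one_le_two)
  have hzero : μ[g * z|m] =ᵐ[μ] 0 := by
    refine hce.trans ?_
    filter_upwards [hz0] with ω h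
    simp [h]
  calc ∫ ω, g ω * z ω ∂μ = ∫ ω, (μ[g * z|m]) ω ∂μ := (integral_condExp hm).symm
    _ = ∫ ω, (0 : Ω → ℝ) ω ∂μ := integral_congr_ae hzero
    _ = 0 := by simp

lemma condexp_clm_zero [IsProbabilityMeasure μ]
    {E F : Type*} [NormedAddCommGroup E] [NormedSpace ℝ E] [CompleteSpace E]
    [NormedAddCommGroup F] [NormedSpace ℝ F] [CompleteSpace F]
    (hm : m ≤ inst) {ε : Ω → E}
    (hεint : Integrable ε μ) (hε0 : μ[ε|m] =ᵐ[μ] 0) (L : E →L[ℝ] F) :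
    μ[fun ω => L (ε ω)|m] =ᵐ[μ] 0 := by
  have hcint : Integrable (fun ω => L (ε ω)) μ := L.integrable_comp hεint
  refine (ae_eq_condExp_of_forall_setIntegral_eq hm hcint
    (fun s _ _ => (integrable_zero _ _ _).integrableOn)
    (fun s hs hμs => ?_) aestronglyMeasurable_const).symm
  have h1 : ∫ x in s, ε x ∂μ = 0 := by
    rw [← setIntegral_condExp hm hεint hs]
    calc ∫ x in s, (μ[ε|m]) x ∂μ = ∫ x in s, (0 : Ω → E) x ∂μ :=
          integral_congr_ae (ae_restrict_of_ae hε0)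
      _ = 0 := by simp
  have h2 : ∫ x in s, L (ε x) ∂μ = L (∫ x in s, ε x ∂μ) :=
    L.integral_comp_comm hεint.integrableOn
  rw [h2, h1]
  simp

end Prob

section Spectral

variable {n : ℕ}

lemma contract_n (hn : 2 ≤ n) (Q : Matrix (Fin n) (Fin n) ℝ) (hQsymm : Q.IsSymm)
    (hQrow : ∀ i, ∑ j, Q i j = 1)
    (hQherm : Q.IsHermitian)
    (hQsorted : ∀ i j : Fin n, i ≤ j → hQherm.eigenvalues j ≤ hQherm.eigenvalues i)
    (hQeig2 : hQherm.eigenvalues ⟨1, by omega⟩ < 1)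
    (hQeign : -1 < hQherm.eigenvalues ⟨n - 1, by omega⟩)
    (γ : ℝ) (hγ0 : 0 < γ) (hγ1 : γ ≤ 1 / 2)
    (v : EuclideanSpace ℝ (Fin n)) (hv : ∑ j, v j = 0) :
    ‖Matrix.toEuclideanLin ((1 : Matrix (Fin n) (Fin n) ℝ) - γ • (1 - Q)) v‖ ^ 2
      ≤ (1 - γ * (1 - hQherm.eigenvalues ⟨1, by omega⟩)) ^ 2 * ‖v‖ ^ 2 := by
  set B : Matrix (Fin n) (Fin n) ℝ := (1 : Matrix (Fin n) (Fin n) ℝ) - γ • (1 - Q) with hB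
  set u := hQherm.eigenvectorBasis with hu
  set eig := hQherm.eigenvalues with heig
  set μ : Fin n → ℝ := fun i => 1 - γ * (1 - eig i) with hμ
  set ρ : ℝ := 1 - γ * (1 - eig ⟨1, by omega⟩) with hρ
  have hQsymm' : ∀ i j, Q i j = Q j i := by
    intro i j
    have := congrFun (congrFun hQsymm j) i
    rwa [Matrix.transpose_apply] at this
  have hBsymm : ∀ i j, B i j = B j i := by
    intro i j
    simp only [hB, Matrix.sub_apply, Matrix.smul_apply, Matrix.one_apply, smul_eq_mul]
    by_cases h : i = j
    · subst h; rfl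
    · simp [h, Ne.symm h, hQsymm' i j]
  -- Q on eigenvectors, Euclidean form
  have hQeigE : ∀ i, Matrix.toEuclideanLin Q (u i) = eig i • u i := by
    intro i
    have h1 : Q *ᵥ ⇑(u i) = eig i • ⇑(u i) := hQherm.mulVec_eigenvectorBasis i
    refine euclid_ext fun p => ?_
    have := congrFun h1 p
    rw [teu_coord]
    simpa [Matrix.mulVec, dotProduct] using this
  have hBeig : ∀ i, Matrix.toEuclideanLin B (u i) = μ i • u i := by
    intro i
    have h1 := hQherm.mulVec_eigenvectorBasis i
    refine euclid_ext fun p => ?_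
    have hq : ∑ j, Q p j * u i j = eig i * u i p := by
      have := congrFun h1 p
      simpa [Matrix.mulVec, dotProduct] using this
    rw [teu_coord]
    have expand : ∀ j, B p j * u i j
        = ((if p = j then u i j else 0) - γ * (if p = j then u i j else 0))
          + γ * (Q p j * u i j) := by
      intro j
      simp only [hB, Matrix.sub_apply, Matrix.smul_apply, Matrix.one_apply, smul_eq_mul]
      split <;> ring
    rw [Finset.sum_congr rfl fun j _ => expand j]
    rw [Finset.sum_add_distrib, Finset.sum_sub_distrib, ← Finset.mul_sum, ← Finset.mul_sum]
    rw [Finset.sum_ite_eq, hq]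
    simp only [Finset.mem_univ, if_true, PiLp.smul_apply, smul_eq_mul, hμ]
    ring
  -- representation of B v
  have hreprB : ∀ i, u.repr (Matrix.toEuclideanLin B v) i = μ i * u.repr v i := by
    intro i
    rw [OrthonormalBasis.repr_apply_apply, OrthonormalBasis.repr_apply_apply]
    rw [← teu_symm B hBsymm (u i) v, hBeig i, real_inner_smul_left]
  -- the all-ones vector
  set e1 : EuclideanSpace ℝ (Fin n) := (WithLp.equiv 2 _).symm (fun _ => 1) with he1
  have he1app : ∀ p, e1 p = 1 := fun p => rfl
  have hQe1 : Matrix.toEuclideanLin Q e1 = e1 := by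
    refine euclid_ext fun p => ?_
    rw [teu_coord]
    simp only [he1app, mul_one]
    exact hQrow p
  have hinner_e1 : ∀ i : Fin n, i ≠ ⟨0, by omega⟩ → (inner ℝ (u i) e1 : ℝ) = 0 := by
    intro i hi
    have h1 : eig i * (inner ℝ (u i) e1 : ℝ) = (inner ℝ (u i) e1 : ℝ) := by
      calc eig i * (inner ℝ (u i) e1 : ℝ) = inner ℝ (eig i • u i) e1 := by
            rw [real_inner_smul_left]
        _ = inner ℝ (Matrix.toEuclideanLin Q (u i)) e1 := by rw [hQeigE i]
        _ = inner ℝ (u i) (Matrix.toEuclideanLin Q e1) := teu_symm Q hQsymm' _ _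
        _ = inner ℝ (u i) e1 := by rw [hQe1]
    have h2 : eig i < 1 := by
      have : (⟨1, by omega⟩ : Fin n) ≤ i := by
        have : (1 : ℕ) ≤ i.val := by
          rcases Nat.eq_zero_or_pos i.val with h | h
          · exact absurd (Fin.ext h) hi
          · omega
        exact this
      exact lt_of_le_of_lt (hQsorted _ _ this) hQeig2
    have h3 : (eig i - 1) * (inner ℝ (u i) e1 : ℝ) = 0 := by
      rw [sub_mul, one_mul, h1, sub_self]
    have h4 : eig i - 1 ≠ 0 := by intro h; linarith
    exact (mul_eq_zero.mp h3).resolve_left h4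
  have he1sum : e1 = (inner ℝ (u ⟨0, by omega⟩) e1 : ℝ) • u ⟨0, by omega⟩ := by
    have hsr := u.sum_repr' e1
    rw [Finset.sum_eq_single (⟨0, by omega⟩ : Fin n)
      (fun b _ hb => by rw [hinner_e1 b hb, zero_smul])
      (fun h => absurd (Finset.mem_univ _) h)] at hsr
    exact hsr.symm
  have hc0 : (inner ℝ (u ⟨0, by omega⟩) e1 : ℝ) ≠ 0 := by
    intro h
    have : e1 = 0 := by rw [he1sum, h, zero_smul]
    have := congrArg (fun v : EuclideanSpace ℝ (Fin n) => v ⟨0, by omega⟩) this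
    beta_reduce at this
    rw [he1app] at this
    exact one_ne_zero (this.trans rfl)
  have hv0 : u.repr v ⟨0, by omega⟩ = 0 := by
    rw [OrthonormalBasis.repr_apply_apply]
    have h1 : (inner ℝ e1 v : ℝ) = 0 := by
      rw [inner_euclid]
      simpa [he1app] using hv
    have h2 : (inner ℝ ((inner ℝ (u ⟨0, by omega⟩) e1 : ℝ) • u ⟨0, by omega⟩) v : ℝ) = 0 := by
      rw [← he1sum]; exact h1
    rw [real_inner_smul_left] at h2
    exact (mul_eq_zero.mp h2).resolve_left hc0
  -- eigenvalue bounds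
  have hμbound : ∀ i : Fin n, i ≠ ⟨0, by omega⟩ → 0 ≤ μ i ∧ μ i ≤ ρ := by
    intro i hi
    have hi1 : (⟨1, by omega⟩ : Fin n) ≤ i := by
      have : (1 : ℕ) ≤ i.val := by
        rcases Nat.eq_zero_or_pos i.val with h | h
        · exact absurd (Fin.ext h) hi
        · omega
      exact this
    have hupper : eig i ≤ eig ⟨1, by omega⟩ := hQsorted _ _ hi1
    have hlower : eig ⟨n - 1, by omega⟩ ≤ eig i := by
      refine hQsorted _ _ ?_
      show i.val ≤ n - 1
      omega
    constructor
    · simp only [hμ]; nlinarith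
    · simp only [hμ, hρ]; nlinarith
  have hρ0 : 0 ≤ ρ := by
    have h2 : eig ⟨n - 1, by omega⟩ ≤ eig ⟨1, by omega⟩ := by
      refine hQsorted _ _ ?_
      show (1 : ℕ) ≤ n - 1
      omega
    simp only [hρ]; nlinarith
  -- Parseval
  have hnorm1 : ‖Matrix.toEuclideanLin B v‖ ^ 2 = ∑ i, (μ i * u.repr v i) ^ 2 := by
    rw [← u.repr.norm_map (Matrix.toEuclideanLin B v), norm_sq_euclid]
    exact Finset.sum_congr rfl fun i _ => by rw [hreprB i]
  have hnorm2 : ‖v‖ ^ 2 = ∑ i, (u.repr v i) ^ 2 := by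
    rw [← u.repr.norm_map v, norm_sq_euclid]
  rw [hnorm1, hnorm2, Finset.mul_sum]
  refine Finset.sum_le_sum fun i _ => ?_
  by_cases hi : i = ⟨0, by omega⟩
  · subst hi; rw [hv0]; simp
  · obtain ⟨h1, h2⟩ := hμbound i hi
    rw [mul_pow]
    have : μ i ^ 2 ≤ ρ ^ 2 := by nlinarith
    nlinarith [sq_nonneg (u.repr v i)]

end Spectral

section Structure

variable {n d : ℕ}

lemma Akron (Q : Matrix (Fin n) (Fin n) ℝ) (γ : ℝ) :
    (1 : Matrix (Fin n × Fin d) (Fin n × Fin d) ℝ) - γ • Qprime Q d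
      = ((1 : Matrix (Fin n) (Fin n) ℝ) - γ • ((1 : Matrix (Fin n) (Fin n) ℝ) - Q))
          ⊗ₖ (1 : Matrix (Fin d) (Fin d) ℝ) := by
  ext ⟨i, a⟩ ⟨j, b⟩
  simp only [Qprime, Matrix.sub_apply, Matrix.smul_apply, Matrix.kroneckerMap_apply,
    Matrix.one_apply, smul_eq_mul, Prod.mk.injEq]
  by_cases h1 : i = j <;> by_cases h2 : a = b <;> simp [h1, h2] <;> ring

lemma avg_coord (hn : 0 < n) (z : EuclideanSpace ℝ (Fin n × Fin d)) (p : Fin n × Fin d) :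
    Matrix.toEuclideanLin (avgMat n d) z p = (n : ℝ)⁻¹ * ∑ j, z (j, p.2) := by
  rw [show avgMat n d
      = ((n : ℝ)⁻¹ • Matrix.of fun _ _ : Fin n => (1 : ℝ)) ⊗ₖ (1 : Matrix (Fin d) (Fin d) ℝ)
      from rfl, kron_coord, teu_coord, Finset.mul_sum]
  refine Finset.sum_congr rfl fun j _ => ?_
  simp [Matrix.smul_apply]

lemma sz_sub_avg (hn : 0 < n) (z : EuclideanSpace ℝ (Fin n × Fin d)) (a : Fin d) :
    ∑ j, (z - Matrix.toEuclideanLin (avgMat n d) z) (j, a) = 0 := by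
  have hns : (n : ℝ) ≠ 0 := Nat.cast_ne_zero.mpr hn.ne'
  simp only [PiLp.sub_apply]
  rw [Finset.sum_sub_distrib]
  have hterm : ∀ j : Fin n, Matrix.toEuclideanLin (avgMat n d) z (j, a)
      = (n : ℝ)⁻¹ * ∑ k, z (k, a) := fun j => avg_coord hn z (j, a)
  rw [Finset.sum_congr rfl fun j _ => hterm j,
    Finset.sum_const, Finset.card_univ, Fintype.card_fin, nsmul_eq_mul, ← mul_assoc,
    mul_inv_cancel₀ hns, one_mul, sub_self]

lemma inner_sub_avg (hn : 0 < n) (z : EuclideanSpace ℝ (Fin n × Fin d)) :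
    (inner ℝ (z - Matrix.toEuclideanLin (avgMat n d) z)
      (Matrix.toEuclideanLin (avgMat n d) z) : ℝ) = 0 := by
  rw [inner_euclid, Fintype.sum_prod_type_right]
  rw [Finset.sum_eq_zero]
  intro a _
  calc ∑ i, (z - Matrix.toEuclideanLin (avgMat n d) z) (i, a)
        * Matrix.toEuclideanLin (avgMat n d) z (i, a)
      = ∑ i, (z - Matrix.toEuclideanLin (avgMat n d) z) (i, a)
        * ((n : ℝ)⁻¹ * ∑ k, z (k, a)) :=
        Finset.sum_congr rfl fun i _ => by rw [avg_coord hn z (i, a)]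
    _ = (∑ i, (z - Matrix.toEuclideanLin (avgMat n d) z) (i, a))
        * ((n : ℝ)⁻¹ * ∑ k, z (k, a)) := by rw [Finset.sum_mul]
    _ = 0 := by rw [sz_sub_avg hn z a, zero_mul]

lemma norm_sub_avg_le (hn : 0 < n) (z : EuclideanSpace ℝ (Fin n × Fin d)) :
    ‖z - Matrix.toEuclideanLin (avgMat n d) z‖ ^ 2 ≤ ‖z‖ ^ 2 := by
  have h := inner_sub_avg hn z
  have hdecomp : z = (z - Matrix.toEuclideanLin (avgMat n d) z)
      + Matrix.toEuclideanLin (avgMat n d) z := by abel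
  calc ‖z - Matrix.toEuclideanLin (avgMat n d) z‖ ^ 2
      ≤ ‖z - Matrix.toEuclideanLin (avgMat n d) z‖ ^ 2
        + ‖Matrix.toEuclideanLin (avgMat n d) z‖ ^ 2 :=
        le_add_of_nonneg_right (sq_nonneg _)
    _ = ‖z‖ ^ 2 := by
        conv_rhs => rw [hdecomp]
        rw [norm_add_sq_real, h]
        ring

lemma qhat_contract (Q : Matrix (Fin n) (Fin n) ℝ)
    (hQnonneg : ∀ i j, 0 ≤ Q i j)
    (hQrow : ∀ i, ∑ j, Q i j = 1) (hQcol : ∀ j, ∑ i, Q i j = 1)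
    (v : EuclideanSpace ℝ (Fin n × Fin d)) :
    ‖Matrix.toEuclideanLin (Qhat Q d) v‖ ^ 2 ≤ ‖v‖ ^ 2 := by
  have hdiag_le_row : ∀ i, Q i i ≤ 1 := by
    intro i
    rw [← hQrow i]
    exact Finset.single_le_sum (fun j _ => hQnonneg i j) (Finset.mem_univ i)
  refine schur_norm_sq _ ?_ ?_ ?_ v
  · rintro ⟨i, a⟩ ⟨j, b⟩
    simp only [Qhat, Matrix.kroneckerMap_apply, Matrix.sub_apply, Matrix.diagonal_apply,
      Matrix.one_apply]
    by_cases h1 : i = j <;> by_cases h2 : a = b <;>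
      simp [h1, h2, hQnonneg i j]
  · rintro ⟨i, a⟩
    rw [Fintype.sum_prod_type]
    have hb : ∀ j : Fin n, ∑ b, Qhat Q d (i, a) (j, b)
        = Q i j - (if i = j then Q i i else 0) := by
      intro j
      have h1 : ∀ b, Qhat Q d (i, a) (j, b)
          = (Q i j - (if i = j then Q i i else 0)) * (if a = b then 1 else 0) := by
        intro b
        simp [Qhat, Matrix.diagonal_apply, Matrix.one_apply]
      rw [Finset.sum_congr rfl fun b _ => h1 b, ← Finset.mul_sum, Finset.sum_ite_eq,
        if_pos (Finset.mem_univ a), mul_one]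
    rw [Finset.sum_congr rfl fun j _ => hb j, Finset.sum_sub_distrib, hQrow i,
      Finset.sum_ite_eq, if_pos (Finset.mem_univ i)]
    linarith [hQnonneg i i]
  · rintro ⟨j, b⟩
    rw [Fintype.sum_prod_type]
    have ha : ∀ i : Fin n, ∑ a, Qhat Q d (i, a) (j, b)
        = Q i j - (if i = j then Q i i else 0) := by
      intro i
      have h1 : ∀ a, Qhat Q d (i, a) (j, b)
          = (Q i j - (if i = j then Q i i else 0)) * (if a = b then 1 else 0) := by
        intro a
        simp [Qhat, Matrix.diagonal_apply, Matrix.one_apply]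
      rw [Finset.sum_congr rfl fun a _ => h1 a, ← Finset.mul_sum, Finset.sum_ite_eq',
        if_pos (Finset.mem_univ b), mul_one]
    rw [Finset.sum_congr rfl fun i _ => ha i, Finset.sum_sub_distrib, hQcol j]
    have : ∑ i, (if i = j then Q i i else 0) = Q j j := by
      rw [Finset.sum_ite_eq', if_pos (Finset.mem_univ j)]
    rw [this]
    linarith [hQnonneg j j]

lemma B_row_sum (Q : Matrix (Fin n) (Fin n) ℝ) (γ : ℝ) (hQrow : ∀ i, ∑ j, Q i j = 1) (i : Fin n) :
    ∑ j, ((1 : Matrix (Fin n) (Fin n) ℝ) - γ • ((1 : Matrix (Fin n) (Fin n) ℝ) - Q)) i j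
      = 1 := by
  have : ∀ j, ((1 : Matrix (Fin n) (Fin n) ℝ) - γ • ((1 : Matrix (Fin n) (Fin n) ℝ) - Q)) i j
      = ((if i = j then 1 else 0) - γ * (if i = j then 1 else 0)) + γ * Q i j := by
    intro j
    simp only [Matrix.sub_apply, Matrix.smul_apply, Matrix.one_apply, smul_eq_mul]
    split <;> ring
  rw [Finset.sum_congr rfl fun j _ => this j, Finset.sum_add_distrib, Finset.sum_sub_distrib,
    ← Finset.mul_sum, ← Finset.mul_sum, Finset.sum_ite_eq, if_pos (Finset.mem_univ i), hQrow i]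
  ring

lemma B_col_sum (Q : Matrix (Fin n) (Fin n) ℝ) (γ : ℝ) (hQcol : ∀ j, ∑ i, Q i j = 1) (j : Fin n) :
    ∑ i, ((1 : Matrix (Fin n) (Fin n) ℝ) - γ • ((1 : Matrix (Fin n) (Fin n) ℝ) - Q)) i j
      = 1 := by
  have : ∀ i, ((1 : Matrix (Fin n) (Fin n) ℝ) - γ • ((1 : Matrix (Fin n) (Fin n) ℝ) - Q)) i j
      = ((if i = j then 1 else 0) - γ * (if i = j then 1 else 0)) + γ * Q i j := by
    intro i
    simp only [Matrix.sub_apply, Matrix.smul_apply, Matrix.one_apply, smul_eq_mul]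
    split <;> ring
  rw [Finset.sum_congr rfl fun i _ => this i, Finset.sum_add_distrib, Finset.sum_sub_distrib,
    ← Finset.mul_sum, ← Finset.mul_sum, Finset.sum_ite_eq', if_pos (Finset.mem_univ j), hQcol j]
  ring

lemma avg_A (hn : 0 < n) (Q : Matrix (Fin n) (Fin n) ℝ) (γ : ℝ)
    (hQcol : ∀ j, ∑ i, Q i j = 1) (z : EuclideanSpace ℝ (Fin n × Fin d)) :
    Matrix.toEuclideanLin (avgMat n d)
        (Matrix.toEuclideanLin ((1 : Matrix (Fin n × Fin d) (Fin n × Fin d) ℝ)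
          - γ • Qprime Q d) z)
      = Matrix.toEuclideanLin (avgMat n d) z := by
  set B := (1 : Matrix (Fin n) (Fin n) ℝ) - γ • ((1 : Matrix (Fin n) (Fin n) ℝ) - Q) with hB
  refine euclid_ext fun p => ?_
  rw [avg_coord hn, avg_coord hn]
  congr 1
  calc ∑ j, Matrix.toEuclideanLin ((1 : Matrix (Fin n × Fin d) (Fin n × Fin d) ℝ)
        - γ • Qprime Q d) z (j, p.2)
      = ∑ j, ∑ l, B j l * z (l, p.2) := by
        refine Finset.sum_congr rfl fun j _ => ?_
        rw [Akron, kron_coord, teu_coord]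
        exact Finset.sum_congr rfl fun l _ => rfl
    _ = ∑ l, (∑ j, B j l) * z (l, p.2) := by
        rw [Finset.sum_comm]
        exact Finset.sum_congr rfl fun l _ => (Finset.sum_mul _ _ _).symm
    _ = ∑ l, z (l, p.2) := by
        refine Finset.sum_congr rfl fun l _ => ?_
        rw [B_col_sum Q γ hQcol l, one_mul]

lemma A_avg (hn : 0 < n) (Q : Matrix (Fin n) (Fin n) ℝ) (γ : ℝ)
    (hQrow : ∀ i, ∑ j, Q i j = 1) (z : EuclideanSpace ℝ (Fin n × Fin d)) :
    Matrix.toEuclideanLin ((1 : Matrix (Fin n × Fin d) (Fin n × Fin d) ℝ)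
        - γ • Qprime Q d) (Matrix.toEuclideanLin (avgMat n d) z)
      = Matrix.toEuclideanLin (avgMat n d) z := by
  set B := (1 : Matrix (Fin n) (Fin n) ℝ) - γ • ((1 : Matrix (Fin n) (Fin n) ℝ) - Q) with hB
  refine euclid_ext fun p => ?_
  rw [Akron, kron_coord, teu_coord]
  calc ∑ j, B p.1 j * Matrix.toEuclideanLin (avgMat n d) z (j, p.2)
      = ∑ j, B p.1 j * ((n : ℝ)⁻¹ * ∑ k, z (k, p.2)) :=
        Finset.sum_congr rfl fun j _ => by rw [avg_coord hn z (j, p.2)]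
    _ = (∑ j, B p.1 j) * ((n : ℝ)⁻¹ * ∑ k, z (k, p.2)) := by rw [Finset.sum_mul]
    _ = (n : ℝ)⁻¹ * ∑ k, z (k, p.2) := by rw [B_row_sum Q γ hQrow p.1, one_mul]
    _ = Matrix.toEuclideanLin (avgMat n d) z p := (avg_coord hn z p).symm

lemma contract_nd (hn : 2 ≤ n) (Q : Matrix (Fin n) (Fin n) ℝ) (hQsymm : Q.IsSymm)
    (hQrow : ∀ i, ∑ j, Q i j = 1)
    (hQherm : Q.IsHermitian)
    (hQsorted : ∀ i j : Fin n, i ≤ j → hQherm.eigenvalues j ≤ hQherm.eigenvalues i)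
    (hQeig2 : hQherm.eigenvalues ⟨1, by omega⟩ < 1)
    (hQeign : -1 < hQherm.eigenvalues ⟨n - 1, by omega⟩)
    (γ : ℝ) (hγ0 : 0 < γ) (hγ1 : γ ≤ 1 / 2)
    (z : EuclideanSpace ℝ (Fin n × Fin d)) (hz : ∀ a, ∑ j, z (j, a) = 0) :
    ‖Matrix.toEuclideanLin ((1 : Matrix (Fin n × Fin d) (Fin n × Fin d) ℝ)
        - γ • Qprime Q d) z‖ ^ 2
      ≤ (1 - γ * (1 - hQherm.eigenvalues ⟨1, by omega⟩)) ^ 2 * ‖z‖ ^ 2 := by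
  rw [Akron, kron_norm_sq, norm_sq_slices, Finset.mul_sum]
  refine Finset.sum_le_sum fun a _ => ?_
  refine contract_n hn Q hQsymm hQrow hQherm hQsorted hQeig2 hQeign γ hγ0 hγ1 (eslice z a) ?_
  simpa using hz a

end Structure

set_option maxHeartbeats 2000000 in
/-- **noisy distributed averaging.**  With martingale-difference
communication noise of variance at most `n·σ_c²`, the expected consensus error of the
noisy averaging recursion `𝐱_k = (I − γ𝐐')𝐱_{k−1} + γ𝐐̂ε_{k−1}` satisfies
`𝔼‖𝐱_k − 𝐱̄_k‖² ≤ (1 − γ(1 − λ₂))^{2k}·‖𝐱_0 − 𝐱̄_0‖² + 2nγσ_c²/(1 − λ₂)`. -/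
theorem noisy_averaging_consensus_bound {n d : ℕ} (hn : 2 ≤ n) (hd : 1 ≤ d)
    (Q : Matrix (Fin n) (Fin n) ℝ)
    (hQsymm : Q.IsSymm)
    (hQnonneg : ∀ i j, 0 ≤ Q i j)
    (hQrow : ∀ i, ∑ j, Q i j = 1)
    (hQcol : ∀ j, ∑ i, Q i j = 1)
    (hQherm : Q.IsHermitian)
    (hQsorted : ∀ i j : Fin n, i ≤ j → hQherm.eigenvalues j ≤ hQherm.eigenvalues i)
    (hQeig1 : hQherm.eigenvalues ⟨0, by omega⟩ = 1)
    (hQeig2 : hQherm.eigenvalues ⟨1, by omega⟩ < 1)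
    (hQeign : -1 < hQherm.eigenvalues ⟨n - 1, by omega⟩)
    (γ σc : ℝ) (hγ0 : 0 < γ) (hγ1 : γ ≤ 1 / 2) (hσc : 0 ≤ σc)
    {Ω : Type*} [MeasurableSpace Ω] (μ : Measure Ω) [IsProbabilityMeasure μ]
    (x ε : ℕ → Ω → EuclideanSpace ℝ (Fin n × Fin d))
    (x0 : EuclideanSpace ℝ (Fin n × Fin d))
    (hx0 : x 0 = fun _ => x0)
    (hεmeas : ∀ k, Measurable (ε k))
    (hεL2 : ∀ k, MemLp (ε k) 2 μ)
    (hεmean : ∀ k, μ[ε k | ⨆ i ∈ Finset.range k,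
        MeasurableSpace.comap (ε i) inferInstance] =ᵐ[μ] 0)
    (hεvar : ∀ k, ∫ ω, ‖ε k ω‖ ^ 2 ∂μ ≤ (n : ℝ) * σc ^ 2)
    (hxrec : ∀ k, x (k + 1) = fun ω =>
      Matrix.toEuclideanLin
        ((1 : Matrix (Fin n × Fin d) (Fin n × Fin d) ℝ) - γ • Qprime Q d) (x k ω)
        + γ • Matrix.toEuclideanLin (Qhat Q d) (ε k ω)) :
    ∀ k : ℕ,
      ∫ ω, ‖x k ω - Matrix.toEuclideanLin (avgMat n d) (x k ω)‖ ^ 2 ∂μ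
        ≤ (1 - γ * (1 - hQherm.eigenvalues ⟨1, by omega⟩)) ^ (2 * k)
            * ‖x0 - Matrix.toEuclideanLin (avgMat n d) x0‖ ^ 2
          + 2 * n * γ * σc ^ 2 / (1 - hQherm.eigenvalues ⟨1, by omega⟩) := by
  have hn0 : 0 < n := by omega
  -- abbreviations
  set lam2 : ℝ := hQherm.eigenvalues ⟨1, by omega⟩ with hlam2def
  set ρ : ℝ := 1 - γ * (1 - lam2) with hρdef
  set E0 : ℝ := ‖x0 - Matrix.toEuclideanLin (avgMat n d) x0‖ ^ 2 with hE0def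
  set S : ℝ := 2 * n * γ * σc ^ 2 / (1 - lam2) with hSdef
  set AM : Matrix (Fin n × Fin d) (Fin n × Fin d) ℝ :=
    (1 : Matrix (Fin n × Fin d) (Fin n × Fin d) ℝ) - γ • Qprime Q d with hAMdef
  set y : ℕ → Ω → EuclideanSpace ℝ (Fin n × Fin d) :=
    fun k ω => x k ω - Matrix.toEuclideanLin (avgMat n d) (x k ω) with hydef
  set w : ℕ → Ω → EuclideanSpace ℝ (Fin n × Fin d) :=
    fun k ω => Matrix.toEuclideanLin (Qhat Q d) (ε k ω)
      - Matrix.toEuclideanLin (avgMat n d) (Matrix.toEuclideanLin (Qhat Q d) (ε k ω))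
    with hwdef
  -- continuous linear maps
  set PL : EuclideanSpace ℝ (Fin n × Fin d) →L[ℝ] EuclideanSpace ℝ (Fin n × Fin d) :=
    LinearMap.toContinuousLinearMap (Matrix.toEuclideanLin (avgMat n d)) with hPL
  set AL : EuclideanSpace ℝ (Fin n × Fin d) →L[ℝ] EuclideanSpace ℝ (Fin n × Fin d) :=
    LinearMap.toContinuousLinearMap (Matrix.toEuclideanLin AM) with hAL
  set CL : EuclideanSpace ℝ (Fin n × Fin d) →L[ℝ] EuclideanSpace ℝ (Fin n × Fin d) :=
    LinearMap.toContinuousLinearMap (Matrix.toEuclideanLin (Qhat Q d)) with hCL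
  set WL : EuclideanSpace ℝ (Fin n × Fin d) →L[ℝ] EuclideanSpace ℝ (Fin n × Fin d) :=
    (ContinuousLinearMap.id ℝ _ - PL).comp CL with hWL
  -- filtration
  set F : ℕ → MeasurableSpace Ω :=
    fun k => ⨆ i ∈ Finset.range k, MeasurableSpace.comap (ε i) inferInstance with hF
  have hFle : ∀ k, F k ≤ ‹MeasurableSpace Ω› :=
    fun k => iSup₂_le fun i _ => (hεmeas i).comap_le
  have hFmono : ∀ k, F k ≤ F (k + 1) := by
    intro k
    refine iSup₂_le fun i hi => ?_
    exact le_iSup₂ (f := fun i (_ : i ∈ Finset.range (k + 1)) =>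
      MeasurableSpace.comap (ε i) inferInstance) i
      (Finset.mem_range.mpr (by have := Finset.mem_range.mp hi; omega))
  -- strong measurability of x
  have hεsm : ∀ k, StronglyMeasurable[F (k + 1)] (ε k) := by
    intro k
    have h1 : MeasurableSpace.comap (ε k) inferInstance ≤ F (k + 1) :=
      le_iSup₂ (f := fun i (_ : i ∈ Finset.range (k + 1)) =>
        MeasurableSpace.comap (ε i) inferInstance) k (Finset.mem_range.mpr (by omega))
    exact (Measurable.mono (measurable_iff_comap_le.mpr le_rfl) h1 le_rfl).stronglyMeasurable
  have hxsm : ∀ k, StronglyMeasurable[F k] (x k) := by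
    intro k
    induction k with
    | zero => rw [hx0]; exact stronglyMeasurable_const
    | succ k ih =>
      rw [hxrec k]
      have h1 : StronglyMeasurable[F (k + 1)]
          (fun ω => Matrix.toEuclideanLin AM (x k ω)) :=
        AL.continuous.comp_stronglyMeasurable (ih.mono (hFmono k))
      have h2 : StronglyMeasurable[F (k + 1)]
          (fun ω => γ • Matrix.toEuclideanLin (Qhat Q d) (ε k ω)) :=
        (CL.continuous.comp_stronglyMeasurable (hεsm k)).const_smul γ
      exact h1.add h2
  have hysm : ∀ k, StronglyMeasurable[F k] (y k) := by
    intro k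
    exact (continuous_id.sub PL.continuous).comp_stronglyMeasurable (hxsm k)
  -- L² bounds
  have hxL2 : ∀ k, MemLp (x k) 2 μ := by
    intro k
    induction k with
    | zero => rw [hx0]; exact memLp_const x0
    | succ k ih =>
      rw [hxrec k]
      exact (AL.comp_memLp' ih).add ((CL.comp_memLp' (hεL2 k)).const_smul γ)
  have hyL2 : ∀ k, MemLp (y k) 2 μ := fun k => (hxL2 k).sub (PL.comp_memLp' (hxL2 k))
  have hwL2 : ∀ k, MemLp (w k) 2 μ := fun k => WL.comp_memLp' (hεL2 k)
  -- zero-sum slices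
  have hySZ : ∀ k ω a, ∑ j, y k ω (j, a) = 0 := fun k ω a => sz_sub_avg hn0 (x k ω) a
  -- recursion for y
  have hyrec : ∀ k ω, y (k + 1) ω = Matrix.toEuclideanLin AM (y k ω) + γ • w k ω := by
    intro k ω
    show x (k + 1) ω - Matrix.toEuclideanLin (avgMat n d) (x (k + 1) ω) = _
    simp only [hxrec k]
    rw [map_add, _root_.map_smul, avg_A hn0 Q γ hQcol (x k ω)]
    have hA : Matrix.toEuclideanLin AM (y k ω)
        = Matrix.toEuclideanLin AM (x k ω)
          - Matrix.toEuclideanLin (avgMat n d) (x k ω) := by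
      show Matrix.toEuclideanLin AM
        (x k ω - Matrix.toEuclideanLin (avgMat n d) (x k ω)) = _
      rw [map_sub, A_avg hn0 Q γ hQrow (x k ω)]
    rw [hA]
    show _ = _ + γ • (Matrix.toEuclideanLin (Qhat Q d) (ε k ω)
      - Matrix.toEuclideanLin (avgMat n d) (Matrix.toEuclideanLin (Qhat Q d) (ε k ω)))
    rw [smul_sub]
    abel
  -- conditional expectation of w coordinates vanish
  have hwcoordzero : ∀ k (c : Fin n × Fin d),
      μ[fun ω => w k ω c | F k] =ᵐ[μ] 0 := by
    intro k c
    exact condexp_clm_zero (hFle k) ((hεL2 k).integrable one_le_two) (hεmean k)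
      ((EuclideanSpace.proj (𝕜 := ℝ) c).comp WL)
  -- the cross term vanishes
  have hcross : ∀ k, ∫ ω, (inner ℝ (Matrix.toEuclideanLin AM (y k ω)) (w k ω) : ℝ) ∂μ = 0 := by
    intro k
    have hAy2 : MemLp (fun ω => Matrix.toEuclideanLin AM (y k ω)) 2 μ :=
      AL.comp_memLp' (hyL2 k)
    calc ∫ ω, (inner ℝ (Matrix.toEuclideanLin AM (y k ω)) (w k ω) : ℝ) ∂μ
        = ∫ ω, ∑ c, Matrix.toEuclideanLin AM (y k ω) c * w k ω c ∂μ := by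
          exact integral_congr_ae (Filter.Eventually.of_forall fun ω =>
            inner_euclid (Matrix.toEuclideanLin AM (y k ω)) (w k ω))
      _ = ∑ c, ∫ ω, Matrix.toEuclideanLin AM (y k ω) c * w k ω c ∂μ := by
          refine integral_finset_sum _ fun c _ => ?_
          exact integrable_mul_of_mem2
            ((EuclideanSpace.proj (𝕜 := ℝ) c).comp_memLp' hAy2)
            ((EuclideanSpace.proj (𝕜 := ℝ) c).comp_memLp' (hwL2 k))
      _ = 0 := by
          refine Finset.sum_eq_zero fun c _ => ?_
          refine integral_mul_condexp_zero (hFle k) ?_ ?_ ?_ (hwcoordzero k c)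
          · exact ((EuclideanSpace.proj (𝕜 := ℝ) c).continuous.comp
              AL.continuous).comp_stronglyMeasurable (hysm k)
          · exact (EuclideanSpace.proj (𝕜 := ℝ) c).comp_memLp' hAy2
          · exact (EuclideanSpace.proj (𝕜 := ℝ) c).comp_memLp' (hwL2 k)
  -- one-step estimate
  have hstep : ∀ k, ∫ ω, ‖y (k + 1) ω‖ ^ 2 ∂μ
      ≤ ρ ^ 2 * ∫ ω, ‖y k ω‖ ^ 2 ∂μ + γ ^ 2 * ((n : ℝ) * σc ^ 2) := by
    intro k
    have hAy2 : MemLp (fun ω => Matrix.toEuclideanLin AM (y k ω)) 2 μ :=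
      AL.comp_memLp' (hyL2 k)
    have hiAy : Integrable (fun ω => ‖Matrix.toEuclideanLin AM (y k ω)‖ ^ 2) μ :=
      integrable_norm_sq_of_mem2 hAy2
    have hiw : Integrable (fun ω => ‖w k ω‖ ^ 2) μ := integrable_norm_sq_of_mem2 (hwL2 k)
    have hiinner : Integrable
        (fun ω => (inner ℝ (Matrix.toEuclideanLin AM (y k ω)) (w k ω) : ℝ)) μ :=
      integrable_inner_of_mem2 hAy2 (hwL2 k)
    have hexpand : ∀ ω, ‖y (k + 1) ω‖ ^ 2
        = ‖Matrix.toEuclideanLin AM (y k ω)‖ ^ 2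
          + (2 * γ) * (inner ℝ (Matrix.toEuclideanLin AM (y k ω)) (w k ω) : ℝ)
          + γ ^ 2 * ‖w k ω‖ ^ 2 := by
      intro ω
      rw [hyrec k ω, norm_add_sq_real, real_inner_smul_right, norm_smul]
      simp only [Real.norm_eq_abs, mul_pow, sq_abs]
      ring
    have i2 : Integrable (fun ω =>
        (2 * γ) * (inner ℝ (Matrix.toEuclideanLin AM (y k ω)) (w k ω) : ℝ)) μ :=
      hiinner.const_mul (2 * γ)
    have i3 : Integrable (fun ω => γ ^ 2 * ‖w k ω‖ ^ 2) μ := hiw.const_mul (γ ^ 2)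
    have i12 : Integrable (fun ω => ‖Matrix.toEuclideanLin AM (y k ω)‖ ^ 2
        + (2 * γ) * (inner ℝ (Matrix.toEuclideanLin AM (y k ω)) (w k ω) : ℝ)) μ :=
      hiAy.add i2
    have e3 : ∫ ω, γ ^ 2 * ‖w k ω‖ ^ 2 ∂μ = γ ^ 2 * ∫ ω, ‖w k ω‖ ^ 2 ∂μ :=
      integral_const_mul _ _
    have e2 : ∫ ω, (2 * γ) * (inner ℝ (Matrix.toEuclideanLin AM (y k ω)) (w k ω) : ℝ) ∂μ
        = (2 * γ) * ∫ ω, (inner ℝ (Matrix.toEuclideanLin AM (y k ω)) (w k ω) : ℝ) ∂μ :=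
      integral_const_mul _ _
    have e12 : ∫ ω, (‖Matrix.toEuclideanLin AM (y k ω)‖ ^ 2
          + (2 * γ) * (inner ℝ (Matrix.toEuclideanLin AM (y k ω)) (w k ω) : ℝ)) ∂μ
        = (∫ ω, ‖Matrix.toEuclideanLin AM (y k ω)‖ ^ 2 ∂μ)
          + ∫ ω, (2 * γ) * (inner ℝ (Matrix.toEuclideanLin AM (y k ω)) (w k ω) : ℝ) ∂μ :=
      integral_add hiAy i2
    have e123 : ∫ ω, (‖Matrix.toEuclideanLin AM (y k ω)‖ ^ 2
          + (2 * γ) * (inner ℝ (Matrix.toEuclideanLin AM (y k ω)) (w k ω) : ℝ)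
          + γ ^ 2 * ‖w k ω‖ ^ 2) ∂μ
        = (∫ ω, (‖Matrix.toEuclideanLin AM (y k ω)‖ ^ 2
          + (2 * γ) * (inner ℝ (Matrix.toEuclideanLin AM (y k ω)) (w k ω) : ℝ)) ∂μ)
          + ∫ ω, γ ^ 2 * ‖w k ω‖ ^ 2 ∂μ :=
      integral_add i12 i3
    have heq : ∫ ω, ‖y (k + 1) ω‖ ^ 2 ∂μ
        = (∫ ω, ‖Matrix.toEuclideanLin AM (y k ω)‖ ^ 2 ∂μ)
          + (2 * γ) * (∫ ω, (inner ℝ (Matrix.toEuclideanLin AM (y k ω)) (w k ω) : ℝ) ∂μ)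
          + γ ^ 2 * ∫ ω, ‖w k ω‖ ^ 2 ∂μ := by
      rw [integral_congr_ae (Filter.Eventually.of_forall hexpand), e123, e12, e2, e3]
    rw [heq, hcross k, mul_zero, add_zero]
    refine add_le_add ?_ ?_
    · have hub : ∀ ω, ‖Matrix.toEuclideanLin AM (y k ω)‖ ^ 2 ≤ ρ ^ 2 * ‖y k ω‖ ^ 2 :=
        fun ω => contract_nd hn Q hQsymm hQrow hQherm hQsorted hQeig2 hQeign γ hγ0 hγ1
          (y k ω) (hySZ k ω)
      calc ∫ ω, ‖Matrix.toEuclideanLin AM (y k ω)‖ ^ 2 ∂μ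
          ≤ ∫ ω, ρ ^ 2 * ‖y k ω‖ ^ 2 ∂μ :=
            integral_mono hiAy ((integrable_norm_sq_of_mem2 (hyL2 k)).const_mul (ρ ^ 2))
              fun ω => hub ω
        _ = ρ ^ 2 * ∫ ω, ‖y k ω‖ ^ 2 ∂μ := integral_const_mul _ _
    · have hub : ∀ ω, ‖w k ω‖ ^ 2 ≤ ‖ε k ω‖ ^ 2 := by
        intro ω
        refine le_trans (norm_sub_avg_le hn0 (Matrix.toEuclideanLin (Qhat Q d) (ε k ω))) ?_
        exact qhat_contract Q hQnonneg hQrow hQcol (ε k ω)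
      have h1 : ∫ ω, ‖w k ω‖ ^ 2 ∂μ ≤ ∫ ω, ‖ε k ω‖ ^ 2 ∂μ :=
        integral_mono hiw (integrable_norm_sq_of_mem2 (hεL2 k)) fun ω => hub ω
      exact mul_le_mul_of_nonneg_left (h1.trans (hεvar k)) (sq_nonneg γ)
  -- initial value
  have he0 : ∫ ω, ‖y 0 ω‖ ^ 2 ∂μ = E0 := by
    have hy0 : y 0 = fun _ => x0 - Matrix.toEuclideanLin (avgMat n d) x0 := by
      funext ω
      show x 0 ω - Matrix.toEuclideanLin (avgMat n d) (x 0 ω) = _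
      rw [hx0]
    rw [hy0]
    simp
    exact hE0def.symm
  -- scalar facts
  have hlamn_le : hQherm.eigenvalues ⟨n - 1, by omega⟩ ≤ lam2 := by
    refine hQsorted _ _ ?_
    show (1 : ℕ) ≤ n - 1
    omega
  have hρ0 : 0 ≤ ρ := by rw [hρdef]; nlinarith
  have hρ1 : ρ ≤ 1 := by rw [hρdef]; nlinarith
  have hD : 0 < 1 - lam2 := by linarith
  have hS0 : 0 ≤ S := by
    rw [hSdef]
    refine div_nonneg (by positivity) hD.le
  have hSD : S * (1 - lam2) = 2 * n * γ * σc ^ 2 := div_mul_cancel₀ _ hD.ne'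
  have hE00 : 0 ≤ E0 := sq_nonneg _
  -- main induction
  have main : ∀ k, ∫ ω, ‖y k ω‖ ^ 2 ∂μ ≤ ρ ^ (2 * k) * E0 + S := by
    intro k
    induction k with
    | zero =>
      rw [he0]
      simp only [Nat.mul_zero, pow_zero, one_mul]
      linarith
    | succ k ih =>
      have h1 := hstep k
      have h2 : ρ ^ 2 * ∫ ω, ‖y k ω‖ ^ 2 ∂μ ≤ ρ ^ 2 * (ρ ^ (2 * k) * E0 + S) :=
        mul_le_mul_of_nonneg_left ih (sq_nonneg ρ)
      have hpow : ρ ^ 2 * ρ ^ (2 * k) = ρ ^ (2 * (k + 1)) := by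
        rw [← pow_add]
        congr 1
        omega
      have hkey : ρ ^ 2 * S + γ ^ 2 * ((n : ℝ) * σc ^ 2) ≤ S := by
        have hnn : (0 : ℝ) ≤ (n : ℝ) := Nat.cast_nonneg n
        have hfac : γ ^ 2 * ((n : ℝ) * σc ^ 2) ≤ γ * (S * (1 - lam2)) := by
          rw [hSD]
          nlinarith
        have hfac2 : γ * (S * (1 - lam2)) ≤ (1 - ρ ^ 2) * S := by
          have hρev : 1 - ρ = γ * (1 - lam2) := by rw [hρdef]; ring
          nlinarith [mul_nonneg (mul_nonneg (sub_nonneg.mpr hρ1) hρ0) hS0]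
        linarith
      calc ∫ ω, ‖y (k + 1) ω‖ ^ 2 ∂μ
          ≤ ρ ^ 2 * ∫ ω, ‖y k ω‖ ^ 2 ∂μ + γ ^ 2 * ((n : ℝ) * σc ^ 2) := h1
        _ ≤ ρ ^ 2 * (ρ ^ (2 * k) * E0 + S) + γ ^ 2 * ((n : ℝ) * σc ^ 2) := by linarith
        _ = ρ ^ (2 * (k + 1)) * E0 + (ρ ^ 2 * S + γ ^ 2 * ((n : ℝ) * σc ^ 2)) := by
            rw [mul_add, ← mul_assoc, hpow]; ring
        _ ≤ ρ ^ (2 * (k + 1)) * E0 + S := by linarith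
  intro k
  exact main k
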